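/- Suppose ε_1,...,ε_n are i.i.d. with mean 0 and E(ε_i^{2m}) < ∞ for some positive integer m. Then max over 0 ≤ i < j ≤ n of (ε_{i+1}+...+ε_j)²/(j−i) is O_p(n^{2/m}): for all δ > 0 there exists M such that for all n, P( max_{0≤i<j≤n} (ε_{i+1}+...+ε_j)²/(j−i) > M n^{2/m} ) < δ. -/

import Mathlib

open MeasureTheory ProbabilityTheory Finset

private lemma abs_pow_le_aux (x : ℝ) {j N : ℕ} (h : j ≤ N) : |x| ^ j ≤ 1 + |x| ^ N := by
  rcases le_total |x| 1 with h1 | h1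
  · have h2 : |x| ^ j ≤ 1 := pow_le_one₀ (abs_nonneg x) h1
    have h3 : (0:ℝ) ≤ |x| ^ N := pow_nonneg (abs_nonneg x) N
    linarith
  · have h2 : |x| ^ j ≤ |x| ^ N := pow_le_pow_right₀ h1 h
    linarith

private lemma eps_pow_int {Ω : Type*} [MeasurableSpace Ω] {μ : Measure Ω} [IsProbabilityMeasure μ]
    (ε : ℕ → Ω → ℝ) (m : ℕ) (hmeas : ∀ i, Measurable (ε i))
    (hident : ∀ i, IdentDistrib (ε i) (ε 1) μ μ)
    (hmom : Integrable (fun ω => (ε 1 ω) ^ (2 * m)) μ)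
    (i j : ℕ) (hj : j ≤ 2 * m) :
    Integrable (fun ω => ε i ω ^ j) μ ∧
      |∫ ω, ε i ω ^ j ∂μ| ≤ 1 + ∫ ω, ε 1 ω ^ (2 * m) ∂μ := by
  have hid : IdentDistrib (fun ω => ε i ω ^ j) (fun ω => ε 1 ω ^ j) μ μ :=
    (hident i).comp (measurable_id.pow_const j)
  have habs : ∀ x : ℝ, |x ^ j| ≤ 1 + x ^ (2*m) := by
    intro x
    have h2 : |x| ^ (2*m) = x ^ (2*m) := (even_two_mul m).pow_abs x
    rw [abs_pow, ← h2]
    exact abs_pow_le_aux x hj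
  have hint1 : Integrable (fun ω => ε 1 ω ^ j) μ := by
    refine ((integrable_const (1:ℝ)).add hmom).mono'
      (((hmeas 1).pow_const j).aestronglyMeasurable) ?_
    exact Filter.Eventually.of_forall fun ω => by
      simpa [Real.norm_eq_abs] using habs (ε 1 ω)
  have hinti : Integrable (fun ω => ε i ω ^ j) μ := hid.integrable_iff.mpr hint1
  refine ⟨hinti, ?_⟩
  rw [hid.integral_eq]
  calc |∫ ω, ε 1 ω ^ j ∂μ| ≤ ∫ ω, |ε 1 ω ^ j| ∂μ := by
        simpa [Real.norm_eq_abs] using norm_integral_le_integral_norm (fun ω => ε 1 ω ^ j) (μ := μ)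
  _ ≤ ∫ ω, (1 + ε 1 ω ^ (2*m)) ∂μ := by
        refine integral_mono hint1.abs ((integrable_const _).add hmom) fun ω => habs _
  _ = 1 + ∫ ω, ε 1 ω ^ (2*m) ∂μ := by
        rw [integral_add (integrable_const _) hmom]; simp

private lemma moment_bound {Ω : Type*} [MeasurableSpace Ω] {μ : Measure Ω}
    [IsProbabilityMeasure μ]
    (ε : ℕ → Ω → ℝ) (m : ℕ) (hmeas : ∀ i, Measurable (ε i))
    (hindep : iIndepFun ε μ)
    (hident : ∀ i, IdentDistrib (ε i) (ε 1) μ μ)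
    (hmom : Integrable (fun ω => (ε 1 ω) ^ (2 * m)) μ)
    (hmean : μ[ε 1] = 0) :
    ∀ a : ℕ, a ≤ m → ∃ D : ℝ, 1 ≤ D ∧ ∀ b ≤ a, ∀ s : Finset ℕ,
      Integrable (fun ω => (∑ t ∈ s, ε t ω) ^ (2 * b)) μ ∧
      ∫ ω, (∑ t ∈ s, ε t ω) ^ (2 * b) ∂μ ≤ D * ((s.card : ℝ) + 1) ^ b := by
  intro a
  induction a with
  | zero =>
      intro _
      refine ⟨1, le_refl 1, ?_⟩
      intro b hb s
      interval_cases b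
      simp
  | succ a ih =>
      intro hsm
      obtain ⟨D, hD1, hD⟩ := ih (by omega)
      obtain ⟨B0, hB0def⟩ : ∃ B0 : ℝ, B0 = 1 + ∫ ω, ε 1 ω ^ (2*m) ∂μ := ⟨_, rfl⟩
      have hB0 : 1 ≤ B0 := by
        have h0 : 0 ≤ ∫ ω, ε 1 ω ^ (2*m) ∂μ :=
          integral_nonneg fun ω => (even_two_mul m).pow_nonneg _
        rw [hB0def]; linarith
      obtain ⟨K, hKdef⟩ : ∃ K : ℝ, K = 2 ^ (2*(a+1)) * B0 * (1+D) + D := ⟨_, rfl⟩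
      have h2pos : (0:ℝ) < 2 ^ (2*(a+1)) := by positivity
      have hKD : D ≤ K := by
        have h1 : (0:ℝ) ≤ 2 ^ (2*(a+1)) * B0 * (1+D) :=
          mul_nonneg (mul_nonneg h2pos.le (by linarith)) (by linarith)
        rw [hKdef]; linarith
      have hK1 : 1 ≤ K := le_trans hD1 hKD
      refine ⟨K, hK1, ?_⟩
      have main : ∀ s : Finset ℕ,
          Integrable (fun ω => (∑ t ∈ s, ε t ω) ^ (2*(a+1))) μ ∧
          ∫ ω, (∑ t ∈ s, ε t ω) ^ (2*(a+1)) ∂μ ≤ K * ((s.card : ℝ)+1)^(a+1) := by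
        intro s
        classical
        induction s using Finset.induction_on with
        | empty =>
            constructor
            · simpa [zero_pow (by omega : 2*(a+1) ≠ 0)] using integrable_const (0:ℝ)
            · simp only [Finset.sum_empty, zero_pow (by omega : 2*(a+1) ≠ 0),
                Finset.card_empty, Nat.cast_zero, zero_add, one_pow, mul_one, integral_zero]
              linarith
        | @insert x s hx ihs =>
            obtain ⟨hSint, hSbd⟩ := ihs
            set N := 2*(a+1) with hN
            set S : Ω → ℝ := fun ω => ∑ t ∈ s, ε t ω with hSdef
            set k : ℝ := (s.card : ℝ) with hk
            have hk0 : (0:ℝ) ≤ k := Nat.cast_nonneg _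
            have hSmeas : Measurable S := Finset.measurable_sum s (fun i _ => hmeas i)
            have hNe : Even N := by rw [hN]; exact even_two_mul _
            have hSbd' : ∫ ω, S ω ^ N ∂μ ≤ K * (k+1)^(a+1) := hSbd
            have hSint' : Integrable (fun ω => S ω ^ N) μ := hSint
            have hIntSr : ∀ r, r ≤ N → Integrable (fun ω => S ω ^ r) μ := by
              intro r hr
              refine ((integrable_const (1:ℝ)).add hSint').mono'
                ((hSmeas.pow_const r).aestronglyMeasurable) ?_
              refine Filter.Eventually.of_forall fun ω => ?_
              show ‖S ω ^ r‖ ≤ 1 + S ω ^ N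
              rw [Real.norm_eq_abs, abs_pow, ← hNe.pow_abs (S ω)]
              exact abs_pow_le_aux (S ω) hr
            have hS2a := hD a le_rfl s
            have hS2a1 : Integrable (fun ω => S ω ^ (2*a)) μ := hS2a.1
            have hS2a2 : ∫ ω, S ω ^ (2*a) ∂μ ≤ D * (k+1)^a := hS2a.2
            have honep : (1:ℝ) ≤ (k+1)^a := one_le_pow₀ (by linarith)
            have hSrbd : ∀ r, r ≤ 2*a → |∫ ω, S ω ^ r ∂μ| ≤ (1+D) * (k+1)^a := by
              intro r hr
              have hint_r : Integrable (fun ω => S ω ^ r) μ := hIntSr r (by omega)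
              have h1 : |∫ ω, S ω ^ r ∂μ| ≤ ∫ ω, |S ω ^ r| ∂μ := by
                simpa [Real.norm_eq_abs] using
                  norm_integral_le_integral_norm (fun ω => S ω ^ r) (μ := μ)
              have h2 : ∫ ω, |S ω ^ r| ∂μ ≤ ∫ ω, (1 + S ω ^ (2*a)) ∂μ := by
                refine integral_mono hint_r.abs ((integrable_const _).add hS2a1) fun ω => ?_
                have h3 : |S ω| ^ (2*a) = S ω ^ (2*a) := (even_two_mul a).pow_abs _
                have h4 := abs_pow_le_aux (S ω) hr
                rw [abs_pow, ← h3]; exact h4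
              have h5 : ∫ ω, (1 + S ω ^ (2*a)) ∂μ = 1 + ∫ ω, S ω ^ (2*a) ∂μ := by
                rw [integral_add (integrable_const _) hS2a1]; simp
              nlinarith
            have hindSx : IndepFun S (ε x) μ := by
              have h := hindep.indepFun_finset_sum_of_notMem hmeas hx
              have he : (∑ j ∈ s, ε j) = S := by
                ext ω; simp [hSdef]
              rwa [he] at h
            have hεint : ∀ j, j ≤ 2*m →
                Integrable (fun ω => ε x ω ^ j) μ ∧
                |∫ ω, ε x ω ^ j ∂μ| ≤ B0 := by
              intro j hj
              obtain ⟨h1, h2⟩ := eps_pow_int ε m hmeas hident hmom x j hj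
              exact ⟨h1, by rw [hB0def]; exact h2⟩
            have hN2m : N ≤ 2*m := by omega
            have hIndep_r : ∀ r : ℕ, IndepFun (fun ω => S ω ^ r) (fun ω => ε x ω ^ (N-r)) μ :=
              fun r => hindSx.comp (measurable_id.pow_const r) (measurable_id.pow_const (N-r))
            have hTermInt : ∀ r, r ≤ N →
                Integrable (fun ω => S ω ^ r * ε x ω ^ (N - r) * (N.choose r : ℝ)) μ := by
              intro r hr
              have h1 : Integrable ((fun ω => S ω ^ r) * (fun ω => ε x ω ^ (N-r))) μ :=
                (hIndep_r r).integrable_mul (hIntSr r hr) (hεint (N-r) (by omega)).1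
              exact h1.mul_const _
            have hexp : (fun ω => (∑ t ∈ insert x s, ε t ω) ^ N)
                = fun ω => ∑ r ∈ range (N+1), S ω ^ r * ε x ω ^ (N - r) * (N.choose r : ℝ) := by
              funext ω
              rw [Finset.sum_insert hx, add_comm, add_pow]
            have hIntN : Integrable (fun ω => (∑ t ∈ insert x s, ε t ω) ^ N) μ := by
              rw [hexp]
              exact integrable_finset_sum _ (fun r hr => hTermInt r (by
                simp only [mem_range] at hr; omega))
            refine ⟨hIntN, ?_⟩
            set g : ℕ → ℝ := fun r =>
              (∫ ω, S ω ^ r ∂μ) * (∫ ω, ε x ω ^ (N-r) ∂μ) * (N.choose r : ℝ) with hg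
            have hIntEq : ∫ ω, (∑ t ∈ insert x s, ε t ω) ^ N ∂μ
                = ∑ r ∈ range (N+1), g r := by
              rw [hexp, integral_finset_sum _ (fun r hr => hTermInt r (by
                simp only [mem_range] at hr; omega))]
              refine Finset.sum_congr rfl fun r hr => ?_
              rw [integral_mul_const, hg]
              congr 1
              exact (hIndep_r r).integral_fun_mul_eq_mul_integral
                ((hSmeas.pow_const r).aestronglyMeasurable)
                (((hmeas x).pow_const _).aestronglyMeasurable)
            have hsplit : ∑ r ∈ range (N+1), g r
                = (∑ r ∈ range (2*a+1), g r) + g (2*a+1) + g (2*a+2) := by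
              have h1 : N + 1 = (2*a+2)+1 := by omega
              rw [h1, Finset.sum_range_succ, Finset.sum_range_succ]
            have hgmid : g (2*a+1) = 0 := by
              have h1 : N - (2*a+1) = 1 := by omega
              have h2 : ∫ ω, ε x ω ^ (N - (2*a+1)) ∂μ = 0 := by
                rw [h1]
                simp only [pow_one]
                rw [(hident x).integral_eq]
                exact hmean
              rw [hg]
              simp only [h2, mul_zero, zero_mul]
            have hgtop : g (2*a+2) = ∫ ω, S ω ^ N ∂μ := by
              have h1 : N - (2*a+2) = 0 := by omega
              have h2 : (2*a+2) = N := by omega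
              rw [hg]
              simp only [h2, Nat.sub_self, pow_zero, Nat.choose_self, Nat.cast_one, mul_one,
                integral_const, measure_univ, ENNReal.toReal_one, smul_eq_mul, one_mul, probReal_univ]
            have hhead : (∑ r ∈ range (2*a+1), g r)
                ≤ 2 ^ N * B0 * (1+D) * (k+1)^a := by
              have hB0' : (0:ℝ) ≤ B0 := by linarith
              have hx1 : (0:ℝ) ≤ (1+D) * (k+1)^a :=
                mul_nonneg (by linarith) (by positivity)
              have hbd : ∀ r ∈ range (2*a+1), g r ≤ (N.choose r : ℝ) * ((1+D) * (k+1)^a * B0) := by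
                intro r hr
                simp only [mem_range] at hr
                have h1 := hSrbd r (by omega)
                have h2 := (hεint (N-r) (by omega)).2
                have h3 : |g r| ≤ (N.choose r : ℝ) * ((1+D) * (k+1)^a * B0) := by
                  rw [hg]
                  simp only [abs_mul, Nat.abs_cast]
                  have hc : (0:ℝ) ≤ (N.choose r : ℝ) := Nat.cast_nonneg _
                  calc |∫ ω, S ω ^ r ∂μ| * |∫ ω, ε x ω ^ (N-r) ∂μ| * (N.choose r : ℝ)
                      ≤ ((1+D) * (k+1)^a) * B0 * (N.choose r : ℝ) := by
                        refine mul_le_mul_of_nonneg_right ?_ hc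
                        exact mul_le_mul h1 h2 (abs_nonneg _) hx1
                    _ = (N.choose r : ℝ) * ((1+D) * (k+1)^a * B0) := by ring
                exact le_trans (le_abs_self _) h3
              calc (∑ r ∈ range (2*a+1), g r)
                  ≤ ∑ r ∈ range (2*a+1), (N.choose r : ℝ) * ((1+D) * (k+1)^a * B0) :=
                    Finset.sum_le_sum hbd
                _ = (∑ r ∈ range (2*a+1), (N.choose r : ℝ)) * ((1+D) * (k+1)^a * B0) := by
                    rw [Finset.sum_mul]
                _ ≤ (∑ r ∈ range (N+1), (N.choose r : ℝ)) * ((1+D) * (k+1)^a * B0) := by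
                    refine mul_le_mul_of_nonneg_right ?_ (mul_nonneg hx1 hB0')
                    refine Finset.sum_le_sum_of_subset_of_nonneg ?_
                      (fun i _ _ => Nat.cast_nonneg _)
                    intro r hr; simp only [mem_range] at *; omega
                _ = 2 ^ N * B0 * (1+D) * (k+1)^a := by
                    have h1 : (∑ r ∈ range (N+1), (N.choose r : ℝ)) = 2 ^ N := by
                      rw [← Nat.cast_sum, Nat.sum_range_choose]
                      push_cast; ring
                    rw [h1]; ring
            have hcard : (((insert x s).card : ℕ) : ℝ) = k + 1 := by
              rw [Finset.card_insert_of_notMem hx]; push_cast [hk]; ring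
            rw [hIntEq, hsplit, hgmid, hgtop, hcard]
            have hKsplit : 2 ^ N * B0 * (1+D) ≤ K := by
              rw [hKdef]; linarith
            have hK0 : (0:ℝ) ≤ K := by linarith
            have hheadK : (∑ r ∈ range (2*a+1), g r) ≤ K * (k+1)^a := by
              have h0 : (0:ℝ) ≤ (k+1)^a := by positivity
              have h1 := mul_le_mul_of_nonneg_right hKsplit h0
              calc (∑ r ∈ range (2*a+1), g r) ≤ 2 ^ N * B0 * (1+D) * (k+1)^a := hhead
                _ ≤ K * (k+1)^a := h1
            have hpow2 : (k+1)^a ≤ (k+2)^a := pow_le_pow_left₀ (by linarith) (by linarith) a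
            have hfin : K * (k+1)^(a+1) + K * (k+1)^a ≤ K * ((k+1)+1)^(a+1) := by
              have h2 : (k+1)^a * (k+2) ≤ (k+2)^a * (k+2) :=
                mul_le_mul_of_nonneg_right hpow2 (by linarith)
              have h4 := mul_le_mul_of_nonneg_left h2 hK0
              calc K * (k+1)^(a+1) + K * (k+1)^a = K * ((k+1)^a * (k+2)) := by ring
                _ ≤ K * ((k+2)^a * (k+2)) := h4
                _ = K * ((k+1)+1)^(a+1) := by ring
            linarith
      intro b hb s
      rcases Nat.lt_or_ge b (a+1) with hb' | hb'
      · obtain ⟨h1, h2⟩ := hD b (by omega) s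
        refine ⟨h1, h2.trans ?_⟩
        have h3 : (0:ℝ) ≤ ((s.card : ℝ) + 1) ^ b := by positivity
        exact mul_le_mul_of_nonneg_right hKD h3
      · have hba : b = a+1 := by omega
        subst hba
        exact main s

theorem max_normalised_partial_sums_Op
    {Ω : Type*} [MeasurableSpace Ω] (μ : Measure Ω) [IsProbabilityMeasure μ]
    (ε : ℕ → Ω → ℝ) (m : ℕ) (hm : 1 ≤ m)
    (hmeas : ∀ i, Measurable (ε i))
    (hindep : iIndepFun ε μ)
    (hident : ∀ i, IdentDistrib (ε i) (ε 1) μ μ)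
    (hmom : Integrable (fun ω => (ε 1 ω) ^ (2 * m)) μ)
    (hmean : μ[ε 1] = 0) :
    ∀ δ : ℝ, 0 < δ → ∃ M : ℝ, ∀ n : ℕ,
      μ {ω | ∃ i j : ℕ, i < j ∧ j ≤ n ∧
          (∑ t ∈ Finset.Ioc i j, ε t ω) ^ 2 / ((j : ℝ) - i)
            > M * (n : ℝ) ^ ((2 : ℝ) / m)}
        < ENNReal.ofReal δ := by
  intro δ hδ
  obtain ⟨D, hD1, hD⟩ := moment_bound ε m hmeas hindep hident hmom hmean m le_rfl
  have hD0 : (0:ℝ) ≤ D := by linarith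
  obtain ⟨M, hMdef⟩ : ∃ M : ℝ, M = max 1 (8 * D * 2^m / δ) := ⟨_, rfl⟩
  have hM1 : (1:ℝ) ≤ M := hMdef ▸ le_max_left _ _
  have hM0 : (0:ℝ) < M := by linarith
  have hM2 : 8 * D * 2^m / δ ≤ M := hMdef ▸ le_max_right _ _
  refine ⟨M, ?_⟩
  intro n
  rcases Nat.eq_zero_or_pos n with rfl | hn
  · have hempty : {ω : Ω | ∃ i j : ℕ, i < j ∧ j ≤ 0 ∧
        (∑ t ∈ Finset.Ioc i j, ε t ω) ^ 2 / ((j : ℝ) - i)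
          > M * ((0:ℕ) : ℝ) ^ ((2 : ℝ) / m)} = ∅ := by
      ext ω; simp only [Set.mem_setOf_eq, Set.mem_empty_iff_false, iff_false, not_exists]
      intro i j h
      omega
    rw [hempty]
    simpa using ENNReal.ofReal_pos.mpr hδ
  · -- n ≥ 1
    have hmR : (0:ℝ) < m := by exact_mod_cast hm
    have hnR : (0:ℝ) < n := by exact_mod_cast hn
    have hn1R : (1:ℝ) ≤ n := by exact_mod_cast hn
    have hMm : (0:ℝ) < M^m := by positivity
    have h2m : (0:ℝ) < 2^m := by positivity
    obtain ⟨r0, hr0def⟩ : ∃ r0 : ℝ, r0 = D * 2^m / (M^m * (n:ℝ)^2) := ⟨_, rfl⟩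
    have hr00 : 0 ≤ r0 := by
      rw [hr0def]
      exact div_nonneg (mul_nonneg hD0 h2m.le) (by positivity)
    set A : ℕ × ℕ → Set Ω := fun p => {ω | p.1 < p.2 ∧ p.2 ≤ n ∧
        (∑ t ∈ Finset.Ioc p.1 p.2, ε t ω) ^ 2 / ((p.2 : ℝ) - p.1)
          > M * (n : ℝ) ^ ((2 : ℝ) / m)} with hA
    have hsub : {ω : Ω | ∃ i j : ℕ, i < j ∧ j ≤ n ∧
        (∑ t ∈ Finset.Ioc i j, ε t ω) ^ 2 / ((j : ℝ) - i)
          > M * (n : ℝ) ^ ((2 : ℝ) / m)}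
        ⊆ ⋃ p ∈ (range (n+1)) ×ˢ (range (n+1)), A p := by
      rintro ω ⟨i, j, h1, h2, h3⟩
      have hmem : (i, j) ∈ (range (n+1)) ×ˢ (range (n+1)) := by
        rw [Finset.mem_product]
        simp only [Finset.mem_range]
        omega
      exact Set.mem_biUnion hmem ⟨h1, h2, h3⟩
    have hpair : ∀ p : ℕ × ℕ, μ (A p) ≤ ENNReal.ofReal r0 := by
      intro p
      by_cases hp : p.1 < p.2 ∧ p.2 ≤ n
      · obtain ⟨hij, hjn⟩ := hp
        set i := p.1
        set j := p.2
        set S : Ω → ℝ := fun ω => ∑ t ∈ Finset.Ioc i j, ε t ω with hS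
        obtain ⟨hSint, hSbd⟩ := hD m le_rfl (Finset.Ioc i j)
        have hcard : (((Finset.Ioc i j).card : ℕ) : ℝ) = (j : ℝ) - i := by
          rw [Nat.card_Ioc]
          exact Nat.cast_sub (le_of_lt hij)
        have hkk1 : (1:ℝ) ≤ (j:ℝ) - i := by
          have : (i:ℝ) + 1 ≤ (j:ℝ) := by exact_mod_cast hij
          linarith
        have hkk0 : (0:ℝ) < (j:ℝ) - i := by linarith
        have hrpow : ((n:ℝ) ^ ((2:ℝ)/m)) ^ m = (n:ℝ)^2 := by
          rw [← Real.rpow_natCast ((n:ℝ) ^ ((2:ℝ)/m)) m, ← Real.rpow_mul (le_of_lt hnR)]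
          rw [div_mul_cancel₀ _ (by positivity : (m:ℝ) ≠ 0)]
          rw [show ((2:ℝ) : ℝ) = ((2:ℕ) : ℝ) by norm_num, Real.rpow_natCast]
        have hrpow0 : (0:ℝ) < (n:ℝ) ^ ((2:ℝ)/m) := Real.rpow_pos_of_pos hnR _
        obtain ⟨c, hc⟩ : ∃ c : ℝ, c = M * (n:ℝ) ^ ((2:ℝ)/m) * ((j:ℝ) - i) := ⟨_, rfl⟩
        have hc0 : 0 < c := by rw [hc]; positivity
        have hsub2 : A p ⊆ {ω | c^m ≤ S ω ^ (2*m)} := by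
          rintro ω ⟨_, _, h3⟩
          have h4 : M * (n:ℝ) ^ ((2:ℝ)/m) * ((j:ℝ) - i) < S ω ^ 2 := by
            rw [gt_iff_lt, lt_div_iff₀ hkk0] at h3
            exact h3
          have h5 : c ^ m ≤ (S ω ^ 2) ^ m :=
            pow_le_pow_left₀ (le_of_lt hc0) (by rw [hc]; exact le_of_lt h4) m
          simpa [pow_mul] using h5
        have hnonneg : 0 ≤ᵐ[μ] fun ω => S ω ^ (2*m) :=
          Filter.Eventually.of_forall fun ω => (even_two_mul m).pow_nonneg _
        have hSint' : Integrable (fun ω => S ω ^ (2*m)) μ := hSint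
        have hmarkov := mul_meas_ge_le_integral_of_nonneg hnonneg hSint' (c^m)
        have hcm0 : (0:ℝ) < c^m := by positivity
        have hSbd2 : ∫ ω, S ω ^ (2*m) ∂μ ≤ D * ((j:ℝ) - i + 1)^m := by
          have := hSbd
          rw [hcard] at this
          exact this
        have htR : (μ {ω | c^m ≤ S ω ^ (2*m)}).toReal ≤ (D * ((j:ℝ) - i + 1)^m) / c^m := by
          rw [le_div_iff₀ hcm0]
          calc (μ {ω | c^m ≤ S ω ^ (2*m)}).toReal * c^m
              = c^m * (μ {ω | c^m ≤ S ω ^ (2*m)}).toReal := by ring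
            _ ≤ ∫ ω, S ω ^ (2*m) ∂μ := hmarkov
            _ ≤ D * ((j:ℝ) - i + 1)^m := hSbd2
        have hreal : (D * ((j:ℝ) - i + 1)^m) / c^m ≤ r0 := by
          have hcm : c^m = M^m * (n:ℝ)^2 * ((j:ℝ) - i)^m := by
            rw [hc, mul_pow, mul_pow, hrpow]
          have h1 : ((j:ℝ) - i + 1)^m ≤ 2^m * ((j:ℝ) - i)^m := by
            have h2 : (j:ℝ) - i + 1 ≤ 2 * ((j:ℝ) - i) := by linarith
            calc ((j:ℝ) - i + 1)^m ≤ (2 * ((j:ℝ) - i))^m :=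
                  pow_le_pow_left₀ (by linarith) h2 m
              _ = 2^m * ((j:ℝ) - i)^m := mul_pow _ _ _
          have hkm : (0:ℝ) < ((j:ℝ) - i)^m := by positivity
          rw [hcm, hr0def, div_le_div_iff₀ (by positivity) (by positivity)]
          have h5 := mul_le_mul_of_nonneg_left h1 hD0
          have h6 := mul_le_mul_of_nonneg_right h5
            (le_of_lt (show (0:ℝ) < M^m * (n:ℝ)^2 by positivity))
          calc D * ((j:ℝ) - i + 1)^m * (M^m * (n:ℝ)^2)
              ≤ D * (2^m * ((j:ℝ) - i)^m) * (M^m * (n:ℝ)^2) := h6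
            _ = D * 2^m * (M^m * (n:ℝ)^2 * ((j:ℝ) - i)^m) := by ring
        have hAfin : μ (A p) ≤ μ {ω | c^m ≤ S ω ^ (2*m)} := measure_mono hsub2
        have hfin : μ {ω | c^m ≤ S ω ^ (2*m)} ≠ ⊤ := measure_ne_top _ _
        calc μ (A p) ≤ μ {ω | c^m ≤ S ω ^ (2*m)} := hAfin
          _ = ENNReal.ofReal ((μ {ω | c^m ≤ S ω ^ (2*m)}).toReal) :=
              (ENNReal.ofReal_toReal hfin).symm
          _ ≤ ENNReal.ofReal r0 := ENNReal.ofReal_le_ofReal (le_trans htR hreal)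
      · have hAe : A p = ∅ := by
          ext ω; simp only [hA, Set.mem_setOf_eq, Set.mem_empty_iff_false, iff_false]
          intro h; exact hp ⟨h.1, h.2.1⟩
        rw [hAe]; simp
    have hkey : (((n+1)*(n+1) : ℕ) : ℝ) * r0 ≤ 4 * D * 2^m / M^m := by
      have hn1 : (((n+1)*(n+1) : ℕ) : ℝ) ≤ 4 * (n:ℝ)^2 := by
        push_cast; nlinarith
      calc (((n+1)*(n+1) : ℕ) : ℝ) * r0
          ≤ (4 * (n:ℝ)^2) * r0 := mul_le_mul_of_nonneg_right hn1 hr00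
        _ = 4 * D * 2^m / M^m := by
            rw [hr0def]
            field_simp
    have hfinal : 4 * D * 2^m / M^m < δ := by
      have hMm' : M ≤ M^m := le_self_pow₀ (by linarith) (by omega)
      have h5 : 4 * D * 2^m / M^m ≤ 4 * D * 2^m / M :=
        div_le_div_of_nonneg_left (by positivity) hM0 hMm'
      have h6 : 4 * D * 2^m / M ≤ δ / 2 := by
        rw [div_le_iff₀ hM0]
        have h7 : 8 * D * 2^m ≤ M * δ := by
          rw [div_le_iff₀ hδ] at hM2
          exact hM2
        nlinarith
      linarith
    calc μ {ω : Ω | ∃ i j : ℕ, i < j ∧ j ≤ n ∧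
          (∑ t ∈ Finset.Ioc i j, ε t ω) ^ 2 / ((j : ℝ) - i)
            > M * (n : ℝ) ^ ((2 : ℝ) / m)}
        ≤ μ (⋃ p ∈ (range (n+1)) ×ˢ (range (n+1)), A p) := measure_mono hsub
      _ ≤ ∑ p ∈ (range (n+1)) ×ˢ (range (n+1)), μ (A p) :=
          measure_biUnion_finset_le _ _
      _ ≤ ∑ _p ∈ (range (n+1)) ×ˢ (range (n+1)), ENNReal.ofReal r0 :=
          Finset.sum_le_sum fun p _ => hpair p
      _ = (((n+1)*(n+1) : ℕ) : ENNReal) * ENNReal.ofReal r0 := by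
          rw [Finset.sum_const, Finset.card_product, Finset.card_range]
          simp [nsmul_eq_mul]
      _ = ENNReal.ofReal ((((n+1)*(n+1) : ℕ) : ℝ) * r0) := by
          rw [ENNReal.ofReal_mul (Nat.cast_nonneg _), ENNReal.ofReal_natCast]
      _ < ENNReal.ofReal δ := by
          rw [ENNReal.ofReal_lt_ofReal_iff hδ]
          exact lt_of_le_of_lt hkey hfinal
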